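/- Let G be a finite connected oriented graph and T a spanning tree. For any two fundamental circuits C_e, C_f (e ≠ f not in T), the number of edges in the intersection of the underlying circuits equals the absolute value of their inner product: |C_e ∩ C_f| = |(C_e, C_f)|, where the inner product is induced from the standard Euclidean inner product on Z^{E(G)}. -/

import Mathlib

open Finset

/-- The signed flow along a walk `p` relative to an orientation `σ` of the edges:
the number of times `p` traverses `e` in the `σ`-direction minus the number of times
it traverses `e` backwards. -/
def walkFlow {V : Type*} [DecidableEq V] {G : SimpleGraph V} (σ : Sym2 V → V × V)
    {u v : V} (p : G.Walk u v) (e : Sym2 V) : ℤ :=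
  ((p.darts.filter (fun d => d.toProd = σ e)).length : ℤ) -
  ((p.darts.filter (fun d => d.toProd = (σ e).swap)).length : ℤ)

/-- The lattice of integer flows `F(G)` of an oriented graph `(G, σ)`: functions
`a : Sym2 V → ℤ` supported on the edges of `G` satisfying Kirchhoff's law at every
vertex (sum over edges with tail `v` equals sum over edges with head `v`). -/
def flowSubmodule {V : Type*} [Fintype V] [DecidableEq V] (G : SimpleGraph V)
    (σ : Sym2 V → V × V) : Submodule ℤ (Sym2 V → ℤ) where
  carrier := {a | (∀ e, a e ≠ 0 → e ∈ G.edgeSet) ∧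
    ∀ v : V, ∑ e ∈ univ.filter (fun e => (σ e).1 = v), a e
           = ∑ e ∈ univ.filter (fun e => (σ e).2 = v), a e}
  zero_mem' := by simp
  add_mem' := by
    rintro a b ⟨ha1, ha2⟩ ⟨hb1, hb2⟩
    refine ⟨fun e he => ?_, fun v => ?_⟩
    · by_contra h
      exact he (by
        have h1 : a e = 0 := by_contra fun h' => h (ha1 e h')
        have h2 : b e = 0 := by_contra fun h' => h (hb1 e h')
        simp [h1, h2])
    · simp only [Pi.add_apply, Finset.sum_add_distrib, ha2 v, hb2 v]
  smul_mem' := by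
    rintro c a ⟨ha1, ha2⟩
    refine ⟨fun e he => ha1 e ?_, fun v => ?_⟩
    · intro h; apply he; simp [h]
    · simp only [Pi.smul_apply, smul_eq_mul, ← Finset.mul_sum, ha2 v]

/-- The inner product on `Z^{E(G)}` (extended to all of `Z^{Sym2 V}`), with
`(e, f) = δ_{ef}` on edge generators. -/
def flowInner {V : Type*} [Fintype V] [DecidableEq V] (a b : Sym2 V → ℤ) : ℤ :=
  ∑ e : Sym2 V, a e * b e

/-- A circuit element of `F(G)`: the flow of an oriented circuit of `G`, i.e. the
signed indicator of a cycle (coefficients `±1` on the edges of the cycle, compatibly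
oriented, and `0` elsewhere). -/
def IsCircuitElement {V : Type*} [DecidableEq V] (G : SimpleGraph V)
    (σ : Sym2 V → V × V) (v : Sym2 V → ℤ) : Prop :=
  ∃ (u : V) (p : G.Walk u u), p.IsCycle ∧ v = walkFlow σ p

namespace StmtAux

open SimpleGraph Walk

variable {V : Type*} [DecidableEq V] {G : SimpleGraph V}

lemma filter_darts_eq_nil {x y : V} {W : G.Walk x y} {q : V × V}
    (hg : s(q.1, q.2) ∉ W.edges) :
    W.darts.filter (fun d => d.toProd = q) = [] := by
  rw [List.filter_eq_nil_iff]
  intro d hd hdq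
  simp only [decide_eq_true_eq] at hdq
  subst hdq
  exact hg (List.mem_map_of_mem (f := Dart.edge) hd)

lemma walkFlow_eq_zero (σ : Sym2 V → V × V) {x y : V} {W : G.Walk x y} {g : Sym2 V}
    (hσ' : s((σ g).1, (σ g).2) = g) (hg : g ∉ W.edges) : walkFlow σ W g = 0 := by
  unfold walkFlow
  rw [filter_darts_eq_nil (by rwa [hσ']), filter_darts_eq_nil (by rwa [Prod.fst_swap, Prod.snd_swap, Sym2.eq_swap, hσ'])]
  simp

lemma walkFlow_decomp (σ : Sym2 V → V × V) {x y c d : V} (hcd : G.Adj c d)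
    (W0 : G.Walk x c) (W1 : G.Walk d y)
    (hW : (W0.append (Walk.cons hcd W1)).IsTrail)
    (hσ' : s((σ s(c, d)).1, (σ s(c, d)).2) = s(c, d)) :
    walkFlow σ (W0.append (Walk.cons hcd W1)) s(c, d)
      = if σ s(c, d) = (c, d) then 1 else -1 := by
  have hnd := hW.edges_nodup
  rw [edges_append, edges_cons] at hnd
  have h0 : s(c, d) ∉ W0.edges := by
    intro h; exact (List.disjoint_of_nodup_append hnd) h (List.mem_cons_self)
  have h1 : s(c, d) ∉ W1.edges := by
    have := (List.Nodup.of_append_right hnd)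
    rw [List.nodup_cons] at this
    exact this.1
  have hor : σ s(c, d) = (c, d) ∨ σ s(c, d) = (d, c) := by
    have := hσ'
    rw [Sym2.eq_iff] at this
    simpa [Prod.ext_iff] using this
  unfold walkFlow
  rw [darts_append, darts_cons, List.filter_append, List.filter_append,
    List.filter_cons, List.filter_cons,
    filter_darts_eq_nil (q := σ s(c,d)) (by rwa [hσ']),
    filter_darts_eq_nil (q := (σ s(c,d)).swap) (by rwa [Prod.fst_swap, Prod.snd_swap, Sym2.eq_swap, hσ']),
    filter_darts_eq_nil (q := σ s(c,d)) (by rwa [hσ']),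
    filter_darts_eq_nil (q := (σ s(c,d)).swap) (by rwa [Prod.fst_swap, Prod.snd_swap, Sym2.eq_swap, hσ'])]
  rcases hor with h | h
  · rw [if_pos h]
    have : (⟨(c, d), hcd⟩ : G.Dart).toProd = (c, d) := rfl
    simp [h, this, Prod.ext_iff, hcd.ne]
  · have hne : σ s(c, d) ≠ (c, d) := by rw [h]; simp [Prod.ext_iff]; intro h'; exact (hcd.ne h'.symm).elim
    rw [if_neg hne]
    simp [h, Prod.ext_iff, hcd.ne, (hcd.ne : c ≠ d)]

lemma swap_filter_len (l : List G.Dart) (q : V × V) :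
    ((l.map SimpleGraph.Dart.symm).reverse.filter (fun d => d.toProd = q)).length
      = (l.filter (fun d => d.toProd = q.swap)).length := by
  induction l with
  | nil => simp
  | cons a l ih =>
    simp only [List.map_cons, List.reverse_cons, List.filter_append, List.length_append,
      List.filter_cons, ih]
    have hiff : (a.symm.toProd = q) ↔ (a.toProd = q.swap) := by
      constructor
      · intro h; rw [← h]; rfl
      · intro h; show a.toProd.swap = q; rw [h, Prod.swap_swap]
    by_cases h : a.toProd = q.swap
    · rw [if_pos (by simp only [decide_eq_true_eq]; exact hiff.mpr h),
        if_pos (by simp only [decide_eq_true_eq]; exact h)]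
      simp
    · rw [if_neg (by simp only [decide_eq_true_eq]; exact fun hh => h (hiff.mp hh)),
        if_neg (by simp only [decide_eq_true_eq]; exact h)]
      simp

lemma walkFlow_reverse (σ : Sym2 V → V × V) {x y : V} (W : G.Walk x y) (g : Sym2 V) :
    walkFlow σ W.reverse g = - walkFlow σ W g := by
  unfold walkFlow
  rw [darts_reverse, swap_filter_len, swap_filter_len, Prod.swap_swap]
  ring

lemma exists_decomp {x y : V} (W : G.Walk x y) {g : Sym2 V} (hg : g ∈ W.edges) :
    ∃ (c d : V) (hcd : G.Adj c d) (W0 : G.Walk x c) (W1 : G.Walk d y),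
      g = s(c, d) ∧ W = W0.append (Walk.cons hcd W1) := by
  induction W with
  | nil => simp at hg
  | cons h W' ih =>
    rw [edges_cons, List.mem_cons] at hg
    rcases hg with hg | hg
    · exact ⟨_, _, h, Walk.nil, W', hg, by rw [nil_append]⟩
    · obtain ⟨c, d, hcd, W0, W1, hgeq, hWeq⟩ := ih hg
      exact ⟨c, d, hcd, Walk.cons h W0, W1, hgeq, by rw [cons_append, ← hWeq]⟩

lemma walkFlow_val (σ : Sym2 V → V × V) {x y : V} {W : G.Walk x y} (hW : W.IsTrail)
    {g : Sym2 V} (hσ' : s((σ g).1, (σ g).2) = g) (hg : g ∈ W.edges) :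
    walkFlow σ W g = 1 ∨ walkFlow σ W g = -1 := by
  obtain ⟨c, d, hcd, W0, W1, rfl, hWeq⟩ := exists_decomp W hg
  rw [hWeq]
  rw [hWeq] at hW
  rw [walkFlow_decomp σ hcd W0 W1 hW hσ']
  by_cases h : σ s(c, d) = (c, d) <;> simp [h]

lemma tree_walk_eq {T : SimpleGraph V} (hT : T.IsTree) {a b : V} {W1 W2 : T.Walk a b}
    (h1 : W1.IsPath) (h2 : W2.IsPath) : W1 = W2 :=
  (hT.existsUnique_path a b).unique h1 h2

lemma core3 {T : SimpleGraph V} (hT : T.IsTree) (σ : Sym2 V → V × V)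
    (hσ : ∀ e, s((σ e).1, (σ e).2) = e)
    {x y z w c d c' d' : V} (hcd : T.Adj c d) (hcd' : T.Adj c' d')
    (P0 : T.Walk x c) (P10 : T.Walk d c') (P11 : T.Walk d' y)
    (hP : (P0.append (Walk.cons hcd (P10.append (Walk.cons hcd' P11)))).IsPath)
    (Q0 : T.Walk z c) (Q1 : T.Walk d w)
    (hQ : (Q0.append (Walk.cons hcd Q1)).IsPath)
    (hh : s(c', d') ∈ (Q0.append (Walk.cons hcd Q1)).edges) :
    walkFlow σ (Q0.append (Walk.cons hcd Q1)) s(c', d')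
      = if σ s(c', d') = (c', d') then 1 else -1 := by
  have hPnd := hP.1.edges_nodup
  rw [edges_append, edges_cons, edges_append, edges_cons] at hPnd
  have htail := (List.nodup_cons.mp hPnd.of_append_right)
  have hgh : s(c, d) ≠ s(c', d') := by
    intro heq
    exact htail.1 (heq ▸ List.mem_append_right _ (List.mem_cons_self))
  have hhP10 : s(c', d') ∉ P10.edges := fun hmem =>
    (List.disjoint_of_nodup_append htail.2) hmem (List.mem_cons_self)
  have hNP : (Walk.cons hcd P10).IsPath := by
    have h1 := hP.of_append_right
    have h2 : ((Walk.cons hcd P10).append (Walk.cons hcd' P11)).IsPath := by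
      rwa [cons_append]
    exact h2.of_append_left
  have hhNP : s(c', d') ∉ (Walk.cons hcd P10).edges := by
    rw [edges_cons]
    intro hmem
    rcases List.mem_cons.mp hmem with h | h
    · exact hgh h.symm
    · exact hhP10 h
  have hM : (Walk.cons hcd (P10.append (Walk.cons hcd' Walk.nil))).IsPath := by
    have h1 := hP.of_append_right
    have h2 : ((Walk.cons hcd (P10.append (Walk.cons hcd' Walk.nil))).append P11)
        = Walk.cons hcd (P10.append (Walk.cons hcd' P11)) := by
      rw [cons_append, ← append_assoc, cons_append, nil_append]
    have h3 : ((Walk.cons hcd (P10.append (Walk.cons hcd' Walk.nil))).append P11).IsPath := by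
      rwa [h2]
    exact h3.of_append_left
  have hgM : s(c, d) ∈ (Walk.cons hcd (P10.append (Walk.cons hcd' Walk.nil))).edges := by
    simp [edges_cons]
  have hQnd := hQ.1.edges_nodup
  rw [edges_append, edges_cons] at hQnd
  have hgQ0 : s(c, d) ∉ Q0.edges := fun hmem =>
    (List.disjoint_of_nodup_append hQnd) hmem (List.mem_cons_self)
  rw [edges_append, edges_cons, List.mem_append, List.mem_cons] at hh
  rcases hh with hh0 | hh | hh1
  rotate_left
  · exact (hgh hh.symm).elim
  · -- s(c', d') ∈ Q1.edges
    obtain ⟨a, b, hab, Q10, Q11, habe, hQ1eq⟩ := exists_decomp Q1 hh1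
    rcases Sym2.eq_iff.mp habe with ⟨rfl, rfl⟩ | ⟨rfl, rfl⟩
    · have hQeq : Q0.append (Walk.cons hcd Q1)
          = (Q0.append (Walk.cons hcd Q10)).append (Walk.cons hab Q11) := by
        rw [hQ1eq, ← append_assoc, cons_append]
      rw [hQeq]
      rw [hQeq] at hQ
      exact walkFlow_decomp σ hab _ _ hQ.1 (hσ _)
    · exfalso
      have hNQ : (Walk.cons hcd (Q10.append (Walk.cons hab Walk.nil))).IsPath := by
        have h1 : (Walk.cons hcd Q1).IsPath := hQ.of_append_right
        rw [hQ1eq] at h1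
        have h2 : ((Walk.cons hcd (Q10.append (Walk.cons hab Walk.nil))).append Q11)
            = Walk.cons hcd (Q10.append (Walk.cons hab Q11)) := by
          rw [cons_append, ← append_assoc, cons_append, nil_append]
        have h3 : ((Walk.cons hcd (Q10.append (Walk.cons hab Walk.nil))).append Q11).IsPath := by
          rwa [h2]
        exact h3.of_append_left
      have heq := tree_walk_eq hT hNP hNQ
      apply hhNP
      rw [heq]
      have hsw : s(c', d') = s(d', c') := Sym2.eq_swap
      simp [edges_cons, edges_append, hsw]
  · -- s(c', d') ∈ Q0.edges
    obtain ⟨a, b, hab, Q00, Q01, habe, hQ0eq⟩ := exists_decomp Q0 hh0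
    have hQ01path : Q01.IsPath := by
      have h1 : Q0.IsPath := hQ.of_append_left
      rw [hQ0eq] at h1
      exact (h1.of_append_right).of_cons
    have hgQ01 : s(c, d) ∉ Q01.edges := by
      intro hcon
      apply hgQ0
      rw [hQ0eq]
      simp only [edges_append, edges_cons, List.mem_append, List.mem_cons]
      tauto
    exfalso
    rcases Sym2.eq_iff.mp habe with ⟨rfl, rfl⟩ | ⟨rfl, rfl⟩
    · have heq := tree_walk_eq hT hQ01path hM.reverse
      apply hgQ01
      rw [heq, edges_reverse, List.mem_reverse]
      exact hgM
    · have heq := tree_walk_eq hT hQ01path hNP.reverse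
      apply hgQ01
      rw [heq, edges_reverse, List.mem_reverse]
      simp [edges_cons]

lemma core2 {T : SimpleGraph V} (hT : T.IsTree) (σ : Sym2 V → V × V)
    (hσ : ∀ e, s((σ e).1, (σ e).2) = e)
    {x y z w c d c' d' : V} (hcd : T.Adj c d) (hcd' : T.Adj c' d')
    (P0 : T.Walk x c) (P10 : T.Walk d c') (P11 : T.Walk d' y)
    (hP : (P0.append (Walk.cons hcd (P10.append (Walk.cons hcd' P11)))).IsPath)
    (Q : T.Walk z w) (hQ : Q.IsPath)
    (hg : s(c, d) ∈ Q.edges) (hh : s(c', d') ∈ Q.edges) :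
    walkFlow σ Q s(c, d) * walkFlow σ Q s(c', d')
      = walkFlow σ (P0.append (Walk.cons hcd (P10.append (Walk.cons hcd' P11)))) s(c, d)
      * walkFlow σ (P0.append (Walk.cons hcd (P10.append (Walk.cons hcd' P11)))) s(c', d') := by
  have hwPg : walkFlow σ (P0.append (Walk.cons hcd (P10.append (Walk.cons hcd' P11)))) s(c, d)
      = if σ s(c, d) = (c, d) then 1 else -1 :=
    walkFlow_decomp σ hcd _ _ hP.1 (hσ _)
  have hPeq : P0.append (Walk.cons hcd (P10.append (Walk.cons hcd' P11)))
      = (P0.append (Walk.cons hcd P10)).append (Walk.cons hcd' P11) := by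
    rw [← append_assoc, cons_append]
  have hP' : ((P0.append (Walk.cons hcd P10)).append (Walk.cons hcd' P11)).IsPath := by
    rw [← hPeq]; exact hP
  have hwPh : walkFlow σ (P0.append (Walk.cons hcd (P10.append (Walk.cons hcd' P11)))) s(c', d')
      = if σ s(c', d') = (c', d') then 1 else -1 := by
    rw [hPeq]
    exact walkFlow_decomp σ hcd' _ _ hP'.1 (hσ _)
  obtain ⟨a, b, hab, Q0, Q1, habe, hQeq⟩ := exists_decomp Q hg
  rcases Sym2.eq_iff.mp habe with ⟨rfl, rfl⟩ | ⟨rfl, rfl⟩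
  · have hQ' : (Q0.append (Walk.cons hab Q1)).IsPath := by rwa [hQeq] at hQ
    have hwQg : walkFlow σ Q s(c, d) = if σ s(c, d) = (c, d) then 1 else -1 := by
      rw [hQeq]; exact walkFlow_decomp σ hab _ _ hQ'.1 (hσ _)
    have hwQh : walkFlow σ Q s(c', d') = if σ s(c', d') = (c', d') then 1 else -1 := by
      rw [hQeq]
      exact core3 hT σ hσ hab hcd' P0 P10 P11 hP Q0 Q1 hQ' (by rw [← hQeq]; exact hh)
    rw [hwPg, hwPh, hwQg, hwQh]
  · have hrev : Q.reverse = Q1.reverse.append (Walk.cons hab.symm Q0.reverse) := by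
      rw [hQeq, reverse_append, reverse_cons, ← append_assoc, cons_append, nil_append]
    have hQrev : (Q1.reverse.append (Walk.cons hab.symm Q0.reverse)).IsPath := by
      rw [← hrev]; exact hQ.reverse
    have hwQg : walkFlow σ Q.reverse s(c, d) = if σ s(c, d) = (c, d) then 1 else -1 := by
      rw [hrev]; exact walkFlow_decomp σ hab.symm _ _ hQrev.1 (hσ _)
    have hwQh : walkFlow σ Q.reverse s(c', d') = if σ s(c', d') = (c', d') then 1 else -1 := by
      rw [hrev]
      exact core3 hT σ hσ hab.symm hcd' P0 P10 P11 hP _ _ hQrev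
        (by rw [← hrev, edges_reverse, List.mem_reverse]; exact hh)
    rw [walkFlow_reverse] at hwQg hwQh
    have h1 : walkFlow σ Q s(c, d) = -(if σ s(c, d) = (c, d) then (1 : ℤ) else -1) := by
      rw [← hwQg]; ring
    have h2 : walkFlow σ Q s(c', d') = -(if σ s(c', d') = (c', d') then (1 : ℤ) else -1) := by
      rw [← hwQh]; ring
    rw [h1, h2, hwPg, hwPh]
    ring

lemma pair {T : SimpleGraph V} (hT : T.IsTree) (σ : Sym2 V → V × V)
    (hσ : ∀ e, s((σ e).1, (σ e).2) = e) {x y z w : V}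
    (P : T.Walk x y) (Q : T.Walk z w) (hP : P.IsPath) (hQ : Q.IsPath)
    {g h : Sym2 V} (hgP : g ∈ P.edges) (hgQ : g ∈ Q.edges)
    (hhP : h ∈ P.edges) (hhQ : h ∈ Q.edges) :
    walkFlow σ P g * walkFlow σ Q g = walkFlow σ P h * walkFlow σ Q h := by
  by_cases hgh : g = h
  · rw [hgh]
  have key : walkFlow σ Q g * walkFlow σ Q h = walkFlow σ P g * walkFlow σ P h := by
    obtain ⟨c, d, hcd, P0, P1, rfl, hPeq⟩ := exists_decomp P hgP
    have hhP' := hhP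
    rw [hPeq, edges_append, edges_cons, List.mem_append, List.mem_cons] at hhP'
    rcases hhP' with hh0 | hheq | hh1
    rotate_left
    · exact (hgh hheq.symm).elim
    · obtain ⟨c', d', hcd', P10, P11, rfl, hP1eq⟩ := exists_decomp P1 hh1
      rw [hP1eq] at hPeq
      rw [hPeq]
      exact core2 hT σ hσ hcd hcd' P0 P10 P11 (by rw [← hPeq]; exact hP) Q hQ hgQ hhQ
    · obtain ⟨c', d', hcd', P00, P01, rfl, hP0eq⟩ := exists_decomp P0 hh0
      have hPeq2 : P = P00.append (Walk.cons hcd' (P01.append (Walk.cons hcd P1))) := by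
        rw [hPeq, hP0eq, ← append_assoc, cons_append]
      rw [hPeq2]
      have hres := core2 hT σ hσ hcd' hcd P00 P01 P1 (by rw [← hPeq2]; exact hP) Q hQ hhQ hgQ
      linarith [hres]
  have v1 := walkFlow_val σ hP.1 (hσ g) hgP
  have v2 := walkFlow_val σ hP.1 (hσ h) hhP
  have v3 := walkFlow_val σ hQ.1 (hσ g) hgQ
  have v4 := walkFlow_val σ hQ.1 (hσ h) hhQ
  rcases v1 with v1 | v1 <;> rcases v2 with v2 | v2 <;> rcases v3 with v3 | v3 <;>
    rcases v4 with v4 | v4 <;> rw [v1, v2, v3, v4] at key ⊢ <;> revert key <;> norm_num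

end StmtAux

/-- With `T` a spanning tree of a finite connected oriented graph `G`,
for any two distinct fundamental circuits `C e`, `C f` (`e ≠ f` not in `T`), the
number of common edges of the underlying circuits equals the absolute value of their
inner product: `|C e ∩ C f| = |(C e, C f)|` (spanning-tree bases are
cancellation-free). -/
theorem stmt_12 {V : Type*} [Fintype V] [DecidableEq V] (G T : SimpleGraph V)
    (hG : G.Connected) (σ : Sym2 V → V × V) (hσ : ∀ e, Sym2.mk (σ e).1 (σ e).2 = e)
    (hTG : T ≤ G) (hT : T.IsTree)
    (p : ∀ e : Sym2 V, e ∈ G.edgeSet \ T.edgeSet → T.Walk (σ e).2 (σ e).1)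
    (hp : ∀ e he, (p e he).IsPath)
    (C : Sym2 V → Sym2 V → ℤ)
    (hC : ∀ e (he : e ∈ G.edgeSet \ T.edgeSet),
      C e = (fun f => if f = e then 1 else 0) + walkFlow σ (p e he))
    (e f : Sym2 V) (he : e ∈ G.edgeSet \ T.edgeSet) (hf : f ∈ G.edgeSet \ T.edgeSet)
    (hef : e ≠ f) :
    {g : Sym2 V | C e g ≠ 0 ∧ C f g ≠ 0}.ncard = (flowInner (C e) (C f)).natAbs := by
  classical
  have hPpath := hp e he
  have hQpath := hp f hf
  have hPe : walkFlow σ (p e he) e = 0 :=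
    StmtAux.walkFlow_eq_zero σ (hσ e)
      (fun hmem => he.2 (SimpleGraph.Walk.edges_subset_edgeSet _ hmem))
  have hPf : walkFlow σ (p e he) f = 0 :=
    StmtAux.walkFlow_eq_zero σ (hσ f)
      (fun hmem => hf.2 (SimpleGraph.Walk.edges_subset_edgeSet _ hmem))
  have hQe : walkFlow σ (p f hf) e = 0 :=
    StmtAux.walkFlow_eq_zero σ (hσ e)
      (fun hmem => he.2 (SimpleGraph.Walk.edges_subset_edgeSet _ hmem))
  have hQf : walkFlow σ (p f hf) f = 0 :=
    StmtAux.walkFlow_eq_zero σ (hσ f)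
      (fun hmem => hf.2 (SimpleGraph.Walk.edges_subset_edgeSet _ hmem))
  have hCe : ∀ g, C e g = (if g = e then 1 else 0) + walkFlow σ (p e he) g := fun g => by
    rw [hC e he]; rfl
  have hCf : ∀ g, C f g = (if g = f then 1 else 0) + walkFlow σ (p f hf) g := fun g => by
    rw [hC f hf]; rfl
  have hprod : ∀ g, C e g * C f g = walkFlow σ (p e he) g * walkFlow σ (p f hf) g := by
    intro g
    rw [hCe g, hCf g]
    by_cases hge : g = e
    · subst hge; simp [hef, hPe, hQe]
    · by_cases hgf : g = f
      · subst hgf; simp [hge, hPf, hQf]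
      · simp [hge, hgf]
  have hset : {g : Sym2 V | C e g ≠ 0 ∧ C f g ≠ 0}
      = {g : Sym2 V | walkFlow σ (p e he) g ≠ 0 ∧ walkFlow σ (p f hf) g ≠ 0} := by
    ext g
    simp only [Set.mem_setOf_eq, hCe g, hCf g]
    by_cases hge : g = e
    · subst hge; simp [hef, hPe, hQe]
    · by_cases hgf : g = f
      · subst hgf; simp [hge, hPf, hQf]
      · simp [hge, hgf]
  set F : Finset (Sym2 V) :=
    univ.filter (fun g => walkFlow σ (p e he) g ≠ 0 ∧ walkFlow σ (p f hf) g ≠ 0) with hFdef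
  have hsetF : {g : Sym2 V | walkFlow σ (p e he) g ≠ 0 ∧ walkFlow σ (p f hf) g ≠ 0}
      = (F : Set (Sym2 V)) := by
    ext g; simp [hFdef]
  have hinner : flowInner (C e) (C f)
      = ∑ g ∈ F, walkFlow σ (p e he) g * walkFlow σ (p f hf) g := by
    show (∑ g : Sym2 V, C e g * C f g) = _
    rw [Finset.sum_congr rfl (fun g _ => hprod g)]
    refine (Finset.sum_filter_of_ne ?_).symm
    intro g _ hg0
    exact ⟨left_ne_zero_of_mul hg0, right_ne_zero_of_mul hg0⟩
  have memP : ∀ g ∈ F, g ∈ (p e he).edges := by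
    intro g hg
    by_contra hmem
    exact (Finset.mem_filter.mp hg).2.1 (StmtAux.walkFlow_eq_zero σ (hσ g) hmem)
  have memQ : ∀ g ∈ F, g ∈ (p f hf).edges := by
    intro g hg
    by_contra hmem
    exact (Finset.mem_filter.mp hg).2.2 (StmtAux.walkFlow_eq_zero σ (hσ g) hmem)
  rw [hset, hsetF, Set.ncard_coe_finset, hinner]
  rcases Finset.eq_empty_or_nonempty F with hF | ⟨g0, hg0⟩
  · rw [hF]; simp
  · have hval : ∀ g ∈ F, walkFlow σ (p e he) g * walkFlow σ (p f hf) g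
        = walkFlow σ (p e he) g0 * walkFlow σ (p f hf) g0 :=
      fun g hg => StmtAux.pair hT σ hσ _ _ hPpath hQpath (memP g hg) (memQ g hg)
        (memP g0 hg0) (memQ g0 hg0)
    rw [Finset.sum_congr rfl hval, Finset.sum_const, nsmul_eq_mul]
    have hv1 := StmtAux.walkFlow_val σ hPpath.1 (hσ g0) (memP g0 hg0)
    have hv2 := StmtAux.walkFlow_val σ hQpath.1 (hσ g0) (memQ g0 hg0)
    rcases hv1 with h1 | h1 <;> rcases hv2 with h2 | h2 <;> rw [h1, h2] <;>
      simp [Int.natAbs_mul]
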